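/- arXiv:0910.5043 — 3 statements merged into one kernel-verified Lean document; each statement's English description precedes it below -/
import Mathlib

section
/- The Lobachevsky function Л(θ) = −∫₀^θ log|2 sin t| dt is periodic with period π: for all real θ, Л(θ + π) = Л(θ). -/
/-- The Lobachevsky function `Л(θ) = -∫₀^θ log |2 sin t| dt`. -/
noncomputable def lobachevsky (θ : ℝ) : ℝ :=
  -∫ t in (0 : ℝ)..θ, Real.log |2 * Real.sin t|

open Real MeasureTheory intervalIntegral Set

/-- The integrand of the Lobachevsky function. -/
noncomputable def lobF (t : ℝ) : ℝ := Real.log |2 * Real.sin t|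

lemma lobF_periodic : Function.Periodic lobF Real.pi := by
  intro x
  simp [lobF, Real.sin_add_pi, mul_neg, abs_neg]

lemma lobF_pi_sub (x : ℝ) : lobF (Real.pi - x) = lobF x := by
  simp [lobF, Real.sin_pi_sub]

lemma lobF_neg (x : ℝ) : lobF (-x) = lobF x := by
  simp [lobF, Real.sin_neg, mul_neg, abs_neg]

lemma lobF_measurable : Measurable lobF :=
  Real.measurable_log.comp ((measurable_const.mul Real.measurable_sin).abs)

/-- `log` is interval integrable on `[0,1]`. -/
lemma intervalIntegrable_log01 : IntervalIntegrable Real.log volume 0 1 := by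
  have h : IntervalIntegrable (fun x => -Real.log x) volume 0 1 := by
    apply intervalIntegrable_deriv_of_nonneg (g := fun x => x - x * Real.log x)
    · exact (continuous_id.sub Real.continuous_mul_log).continuousOn
    · intro x hx
      rw [show min (0:ℝ) 1 = 0 by norm_num, show max (0:ℝ) 1 = 1 by norm_num] at hx
      have h1 := (hasDerivAt_id x).sub (Real.hasDerivAt_mul_log (ne_of_gt hx.1))
      refine h1.congr_deriv ?_
      ring
    · intro x hx
      rw [show min (0:ℝ) 1 = 0 by norm_num, show max (0:ℝ) 1 = 1 by norm_num] at hx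
      simpa using Real.log_nonpos hx.1.le hx.2.le
  have hEq : Real.log = -fun x => -Real.log x := by funext x; simp
  rw [hEq]
  exact h.neg

/-- `lobF` is interval integrable on `[0, π/2]`. -/
lemma lobF_intervalIntegrable_half :
    IntervalIntegrable lobF volume 0 (Real.pi / 2) := by
  have hpi := Real.pi_pos
  have hpi4 := Real.pi_le_four
  have habs : IntervalIntegrable (fun t => |Real.log t| + Real.log 2) volume 0 (Real.pi / 2) := by
    have h1 : IntervalIntegrable (fun t => |Real.log t|) volume 0 1 :=
      intervalIntegrable_log01.abs
    have h2 : IntervalIntegrable (fun t => |Real.log t|) volume 1 (Real.pi / 2) := by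
      refine (intervalIntegrable_log ?_).abs
      intro h
      rw [Set.mem_uIcc] at h
      rcases h with ⟨h, _⟩ | ⟨_, h⟩ <;> linarith
    exact (h1.trans h2).add intervalIntegrable_const
  rw [intervalIntegrable_iff_integrableOn_Ioc_of_le (by linarith)]
  have hgi : IntegrableOn (fun t => |Real.log t| + Real.log 2) (Ioc 0 (Real.pi / 2)) volume := by
    rw [intervalIntegrable_iff_integrableOn_Ioc_of_le (by linarith)] at habs
    exact habs
  refine hgi.mono' (lobF_measurable.aestronglyMeasurable.restrict) ?_
  rw [ae_restrict_iff' measurableSet_Ioc]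
  refine Filter.Eventually.of_forall fun t ht => ?_
  obtain ⟨ht0, ht1⟩ := ht
  have hsinpos : 0 < Real.sin t := Real.sin_pos_of_pos_of_lt_pi ht0 (by linarith)
  have habs2 : |2 * Real.sin t| = 2 * Real.sin t := abs_of_pos (by linarith)
  have hup : 2 * Real.sin t ≤ 2 * t := by
    have := Real.sin_le ht0.le
    linarith
  have hlow : t ≤ 2 * Real.sin t := by
    have hms := Real.mul_le_sin ht0.le ht1
    have h5 : 2 * t ≤ Real.pi * Real.sin t := by
      have := mul_le_mul_of_nonneg_left hms hpi.le
      rwa [show Real.pi * (2 / Real.pi * t) = 2 * t by field_simp] at this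
    nlinarith [mul_nonneg (by linarith : (0:ℝ) ≤ 4 - Real.pi) hsinpos.le]
  have hlog2 : (0:ℝ) ≤ Real.log 2 := Real.log_nonneg one_le_two
  have hub : Real.log (2 * Real.sin t) ≤ Real.log t + Real.log 2 := by
    calc Real.log (2 * Real.sin t) ≤ Real.log (2 * t) :=
          Real.log_le_log (by linarith) hup
      _ = Real.log 2 + Real.log t := Real.log_mul two_ne_zero (ne_of_gt ht0)
      _ = Real.log t + Real.log 2 := by ring
  have hlb : Real.log t ≤ Real.log (2 * Real.sin t) := Real.log_le_log ht0 hlow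
  simp only [lobF, habs2, Real.norm_eq_abs]
  rw [abs_le]
  constructor
  · have := neg_abs_le (Real.log t)
    linarith
  · have := le_abs_self (Real.log t)
    linarith

/-- `lobF` is interval integrable on `[0, π]`. -/
lemma lobF_intervalIntegrable_pi : IntervalIntegrable lobF volume 0 Real.pi := by
  have h2 : IntervalIntegrable lobF volume (Real.pi / 2) Real.pi := by
    have h := (lobF_intervalIntegrable_half.comp_sub_left Real.pi)
    simp only [lobF_pi_sub, sub_zero] at h
    have : Real.pi - Real.pi / 2 = Real.pi / 2 := by ring
    rw [this] at h
    exact h.symm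
  exact lobF_intervalIntegrable_half.trans h2

/-- `lobF` is interval integrable on every interval. -/
lemma lobF_intervalIntegrable (a b : ℝ) : IntervalIntegrable lobF volume a b := by
  have hpi := Real.pi_pos
  have hpi3 := Real.pi_gt_three
  have hn : ∀ n : ℕ, IntervalIntegrable lobF volume 0 (n * Real.pi) := by
    intro n
    induction n with
    | zero => simp
    | succ n ih =>
      have hs := lobF_intervalIntegrable_pi.comp_add_right (-(n * Real.pi))
      simp only [sub_neg_eq_add, zero_add] at hs
      have heq : (fun x => lobF (x + -(n * Real.pi))) = lobF := by
        funext x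
        rw [← sub_eq_add_neg]
        exact lobF_periodic.sub_nat_mul_eq n
      rw [heq] at hs
      have hcast : ((n + 1 : ℕ) : ℝ) * Real.pi = Real.pi + (n : ℝ) * Real.pi := by
        push_cast; ring
      rw [hcast]
      exact ih.trans hs
  obtain ⟨n, hna⟩ := exists_nat_ge (max |a| |b|)
  have hnpi : max |a| |b| ≤ n * Real.pi := by
    calc max |a| |b| ≤ (n : ℝ) := hna
      _ = (n : ℝ) * 1 := by ring
      _ ≤ (n : ℝ) * Real.pi := by
          apply mul_le_mul_of_nonneg_left (by linarith) (Nat.cast_nonneg n)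
  have hneg : IntervalIntegrable lobF volume (-(n * Real.pi)) 0 := by
    have h := (IntervalIntegrable.iff_comp_neg (f := lobF) (a := 0) (b := n * Real.pi)).mp (hn n)
    simp only [lobF_neg, neg_zero] at h
    exact h.symm
  have hbig : IntervalIntegrable lobF volume (-(n * Real.pi)) (n * Real.pi) :=
    hneg.trans (hn n)
  apply hbig.mono_set
  have hle : -(n * Real.pi) ≤ n * Real.pi := by
    have : (0:ℝ) ≤ n * Real.pi := by positivity
    linarith
  rw [Set.uIcc_of_le hle]
  intro x hx
  have hx' := Set.mem_uIcc.mp hx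
  have ha' : -(↑n * Real.pi) ≤ a ∧ a ≤ n * Real.pi := by
    have h1 : |a| ≤ n * Real.pi := le_trans (le_max_left _ _) hnpi
    exact ⟨by linarith [neg_abs_le a], by linarith [le_abs_self a]⟩
  have hb' : -(↑n * Real.pi) ≤ b ∧ b ≤ n * Real.pi := by
    have h1 : |b| ≤ n * Real.pi := le_trans (le_max_right _ _) hnpi
    exact ⟨by linarith [neg_abs_le b], by linarith [le_abs_self b]⟩
  constructor
  · rcases hx' with ⟨h1, _⟩ | ⟨h1, _⟩ <;> linarith [ha'.1, hb'.1]
  · rcases hx' with ⟨_, h2⟩ | ⟨_, h2⟩ <;> linarith [ha'.2, hb'.2]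

/-- The Euler log-sine integral: `∫₀^π log |2 sin t| dt = 0`. -/
lemma lobF_integral_pi : ∫ t in (0:ℝ)..Real.pi, lobF t = 0 := by
  have hpi := Real.pi_pos
  set J : ℝ := ∫ t in (0:ℝ)..(Real.pi / 2), lobF t with hJ
  set I : ℝ := ∫ t in (0:ℝ)..Real.pi, lobF t with hI
  -- I = 2 J
  have hsecond : ∫ t in (Real.pi / 2)..Real.pi, lobF t = J := by
    have h := intervalIntegral.integral_comp_sub_left (a := (0:ℝ)) (b := Real.pi / 2)
      lobF Real.pi
    rw [show Real.pi - Real.pi / 2 = Real.pi / 2 by ring, sub_zero] at h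
    rw [← h]
    apply intervalIntegral.integral_congr
    intro x _
    exact lobF_pi_sub x
  have hI2J : I = J + J := by
    rw [hI, ← intervalIntegral.integral_add_adjacent_intervals
      (lobF_intervalIntegrable 0 (Real.pi / 2))
      (lobF_intervalIntegrable (Real.pi / 2) Real.pi), hsecond]
  -- (1/2) I = ∫₀^{π/2} lobF (2x)
  have hdup : ∫ x in (0:ℝ)..(Real.pi / 2), lobF (2 * x) = (2:ℝ)⁻¹ * I := by
    have h := intervalIntegral.integral_comp_mul_left (a := (0:ℝ)) (b := Real.pi / 2)
      lobF (by norm_num : (2:ℝ) ≠ 0)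
    rw [h, mul_zero, show (2:ℝ) * (Real.pi / 2) = Real.pi by ring, smul_eq_mul]
  -- ∫₀^{π/2} lobF (2x) = ∫₀^{π/2} (lobF x + lobF (π/2 - x))
  have hsplit : ∫ x in (0:ℝ)..(Real.pi / 2), lobF (2 * x)
      = ∫ x in (0:ℝ)..(Real.pi / 2), (lobF x + lobF (Real.pi / 2 - x)) := by
    apply intervalIntegral.integral_congr_ae
    have hne : ∀ᵐ x : ℝ, x ≠ Real.pi / 2 := by
      refine ae_iff.2 ?_
      have : {x : ℝ | ¬x ≠ Real.pi / 2} = {Real.pi / 2} := by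
        ext x; simp [not_not]
      rw [this]
      exact measure_singleton _
    filter_upwards [hne] with x hx hmem
    rw [Set.uIoc_of_le (by linarith)] at hmem
    obtain ⟨hx0, hx1⟩ := hmem
    have hx1' : x < Real.pi / 2 := lt_of_le_of_ne hx1 hx
    have hsin : 0 < Real.sin x := Real.sin_pos_of_pos_of_lt_pi hx0 (by linarith)
    have hcos : 0 < Real.cos x := Real.cos_pos_of_mem_Ioo ⟨by linarith, hx1'⟩
    have hprod : 2 * Real.sin (2 * x) = (2 * Real.sin x) * (2 * Real.cos x) := by
      rw [Real.sin_two_mul]; ring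
    have h1 : |2 * Real.sin x| ≠ 0 := by positivity
    have h2 : |2 * Real.cos x| ≠ 0 := by positivity
    calc lobF (2 * x) = Real.log (|2 * Real.sin x| * |2 * Real.cos x|) := by
          rw [lobF, hprod, abs_mul]
      _ = Real.log |2 * Real.sin x| + Real.log |2 * Real.cos x| := Real.log_mul h1 h2
      _ = lobF x + lobF (Real.pi / 2 - x) := by
          rw [lobF, lobF, Real.sin_pi_div_two_sub]
  -- ∫₀^{π/2} lobF (π/2 - x) = J
  have hrefl : ∫ x in (0:ℝ)..(Real.pi / 2), lobF (Real.pi / 2 - x) = J := by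
    have h := intervalIntegral.integral_comp_sub_left (a := (0:ℝ)) (b := Real.pi / 2)
      lobF (Real.pi / 2)
    rw [sub_self, sub_zero] at h
    exact h
  have hcomp : IntervalIntegrable (fun x => lobF (Real.pi / 2 - x)) volume 0 (Real.pi / 2) := by
    have h := (lobF_intervalIntegrable 0 (Real.pi / 2)).comp_sub_left (Real.pi / 2)
    rw [sub_zero, sub_self] at h
    exact h.symm
  have hsum : ∫ x in (0:ℝ)..(Real.pi / 2), (lobF x + lobF (Real.pi / 2 - x)) = J + J := by
    rw [intervalIntegral.integral_add (lobF_intervalIntegrable 0 (Real.pi / 2)) hcomp, hrefl]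
  have : (2:ℝ)⁻¹ * I = J + J := by rw [← hdup, hsplit, hsum]
  have : (2:ℝ)⁻¹ * I = I := by rw [this, ← hI2J]
  linarith

/-- The Lobachevsky function is periodic with period `π`. -/
theorem lobachevsky_periodic (θ : ℝ) :
    lobachevsky (θ + Real.pi) = lobachevsky θ := by
  have hkey : ∫ t in θ..(θ + Real.pi), lobF t = 0 := by
    rw [lobF_periodic.intervalIntegral_add_eq θ 0, zero_add]
    exact lobF_integral_pi
  have hsplit : ∫ t in (0:ℝ)..(θ + Real.pi), lobF t
      = (∫ t in (0:ℝ)..θ, lobF t) + ∫ t in θ..(θ + Real.pi), lobF t :=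
    (intervalIntegral.integral_add_adjacent_intervals
      (lobF_intervalIntegrable 0 θ) (lobF_intervalIntegrable θ (θ + Real.pi))).symm
  show -∫ t in (0:ℝ)..(θ + Real.pi), Real.log |2 * Real.sin t|
      = -∫ t in (0:ℝ)..θ, Real.log |2 * Real.sin t|
  have : (∫ t in (0:ℝ)..(θ + Real.pi), lobF t) = ∫ t in (0:ℝ)..θ, lobF t := by
    rw [hsplit, hkey, add_zero]
  simpa [lobF] using congrArg Neg.neg this
end

section
/- For every positive integer n and every real θ, the Lobachevsky function satisfies the distribution relation Л(nθ) = n · Σ_{k=0}^{n−1} Л(θ + kπ/n). -/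
open Complex Finset

lemma prod_one_sub_pow (n : ℕ) (hn : 0 < n) (α : ℂ) :
    ∏ k ∈ Finset.range n, (1 - Complex.exp (-(2 * ↑Real.pi * Complex.I) / n) ^ k * α)
      = 1 - α ^ n := by
  have hζ : IsPrimitiveRoot (Complex.exp (-(2 * ↑Real.pi * Complex.I) / n)) n := by
    have h1 := (Complex.isPrimitiveRoot_exp n hn.ne').inv
    rw [← Complex.exp_neg] at h1
    rwa [← neg_div] at h1
  have h := X_pow_sub_C_eq_prod hζ hn (rfl : α ^ n = α ^ n)
  have h2 := congrArg (Polynomial.eval 1) h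
  simpa [Polynomial.eval_prod, mul_comm] using h2.symm

lemma two_sin_factor (z : ℂ) :
    2 * Complex.sin z = -Complex.I * Complex.exp (z * Complex.I) *
      (1 - Complex.exp (-(2 * z) * Complex.I)) := by
  have h1 : Complex.exp (z * Complex.I) * Complex.exp (-(2 * z) * Complex.I)
      = Complex.exp (-z * Complex.I) := by
    rw [← Complex.exp_add]; congr 1; ring
  rw [Complex.sin]
  linear_combination (-Complex.I) * h1

lemma exp_neg_pi_div_two : Complex.exp (-(↑Real.pi / 2) * Complex.I) = -Complex.I := by
  have h : (-(↑Real.pi / 2) * Complex.I : ℂ) = ↑(-(Real.pi / 2)) * Complex.I := by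
    push_cast; ring
  rw [h, Complex.exp_mul_I, ← Complex.ofReal_cos, ← Complex.ofReal_sin]
  simp

lemma prod_two_sin_complex (n : ℕ) (hn : 0 < n) (θ : ℂ) :
    ∏ k ∈ Finset.range n, (2 * Complex.sin (θ + k * ↑Real.pi / n))
      = 2 * Complex.sin (n * θ) := by
  set I := Complex.I
  set ζ : ℂ := Complex.exp (-(2 * ↑Real.pi * I) / n) with hζdef
  have step1 : ∀ k ∈ Finset.range n,
      2 * Complex.sin (θ + k * ↑Real.pi / n)
        = -I * Complex.exp ((θ + k * ↑Real.pi / n) * I)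
            * (1 - ζ ^ k * Complex.exp (-(2 * θ) * I)) := by
    intro k _
    rw [two_sin_factor]
    congr 2
    rw [hζdef, ← Complex.exp_nat_mul, ← Complex.exp_add]
    congr 1
    field_simp
    ring
  rw [Finset.prod_congr rfl step1]
  simp only [Finset.prod_mul_distrib, Finset.prod_const, Finset.card_range]
  rw [prod_one_sub_pow n hn, ← Complex.exp_sum]
  have hn' : (n : ℂ) ≠ 0 := Nat.cast_ne_zero.mpr hn.ne'
  have hsum : ∑ k ∈ Finset.range n, ((θ + k * ↑Real.pi / n) * I)
      = (n * θ + (n - 1) * ↑Real.pi / 2) * I := by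
    rw [← Finset.sum_mul]
    congr 1
    rw [Finset.sum_add_distrib, Finset.sum_const, Finset.card_range, nsmul_eq_mul]
    have hg : ∑ k ∈ Finset.range n, (k : ℂ) = n * (n - 1) / 2 := by
      have := Finset.sum_range_id_mul_two n
      have h2 : ((∑ i ∈ Finset.range n, i : ℕ) : ℂ) * 2 = (n : ℂ) * ((n : ℂ) - 1) := by
        rw [← Nat.cast_ofNat, ← Nat.cast_mul, this, Nat.cast_mul, Nat.cast_sub hn]
        push_cast; ring
      push_cast at h2 ⊢
      linear_combination h2 / 2
    rw [show ∑ k ∈ Finset.range n, ((k : ℂ) * ↑Real.pi / n)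
        = (∑ k ∈ Finset.range n, (k : ℂ)) * ↑Real.pi / n by
      rw [Finset.sum_mul, Finset.sum_div], hg]
    field_simp
  rw [hsum]
  have hα : Complex.exp (-(2 * θ) * I) ^ n = Complex.exp (-(2 * ((n : ℂ) * θ)) * I) := by
    rw [← Complex.exp_nat_mul]; congr 1; ring
  rw [hα, two_sin_factor]
  have hmi : (-I) ^ n = Complex.exp ((n : ℂ) * (-(↑Real.pi / 2) * I)) := by
    rw [Complex.exp_nat_mul, exp_neg_pi_div_two]
  rw [hmi, ← Complex.exp_add]
  rw [show -I = Complex.exp (-(↑Real.pi / 2) * I) from exp_neg_pi_div_two.symm,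
    ← Complex.exp_add]
  congr 2
  ring

open MeasureTheory Set in
lemma integrableOn_log_Ioc01 : IntegrableOn Real.log (Set.Ioc 0 1) := by
  have h := intervalIntegral.integrableOn_deriv_of_nonneg
    (g := fun x : ℝ => x - x * Real.log x) (g' := fun x : ℝ => -Real.log x) (a := 0) (b := 1)
    ((continuous_id.sub Real.continuous_mul_log).continuousOn)
    (fun x hx => by
      have h1 := (hasDerivAt_id x).sub (Real.hasDerivAt_mul_log hx.1.ne')
      exact h1.congr_deriv (by ring))
    (fun x hx => by simpa using Real.log_nonpos hx.1.le hx.2.le)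
  have h3 := h.neg
  simp only [Pi.neg_def, neg_neg] at h3
  exact h3

open MeasureTheory Set in
lemma integrableOn_log_Ioc (b : ℝ) : IntegrableOn Real.log (Set.Ioc 0 b) := by
  have h1 : IntegrableOn Real.log (Set.Ioc 0 1) := integrableOn_log_Ioc01
  by_cases hb1 : b ≤ 1
  · exact h1.mono_set (Set.Ioc_subset_Ioc_right hb1)
  · push_neg at hb1
    have h2 : IntegrableOn Real.log (Set.Ioc 1 b) :=
      (intervalIntegral.intervalIntegrable_log (by
        rw [Set.uIcc_of_le hb1.le]; intro h; exact absurd h.1 (by norm_num))).1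
    have : Set.Ioc 0 b = Set.Ioc 0 1 ∪ Set.Ioc 1 b :=
      (Set.Ioc_union_Ioc_eq_Ioc (by norm_num) hb1.le).symm
    rw [this]
    exact h1.union h2

open MeasureTheory Set Real in
lemma integrableOn_f_Ioc : IntegrableOn (fun t => Real.log |2 * Real.sin t|)
    (Set.Ioc 0 (Real.pi / 2)) := by
  have hmaj : IntegrableOn (fun t => Real.log 2 + |Real.log t|) (Set.Ioc 0 (Real.pi / 2)) := by
    refine (integrableOn_const measure_Ioc_lt_top.ne).add ?_
    exact (integrableOn_log_Ioc (Real.pi / 2)).abs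
  refine Integrable.mono' hmaj ?_ ?_
  · exact (Real.measurable_log.comp
      ((measurable_const.mul Real.measurable_sin).abs)).aestronglyMeasurable
  · rw [ae_restrict_iff' measurableSet_Ioc]
    refine ae_of_all _ fun t ht => ?_
    have hπ := Real.pi_pos
    have hs : 0 < Real.sin t :=
      Real.sin_pos_of_pos_of_lt_pi ht.1 (lt_of_le_of_lt ht.2 (by linarith))
    have habs : |2 * Real.sin t| = 2 * Real.sin t := abs_of_pos (by linarith)
    have hub : Real.sin t ≤ t := Real.sin_le ht.1.le
    have hlb : 2 / Real.pi * t ≤ Real.sin t := Real.mul_le_sin ht.1.le ht.2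
    have hπ4 : Real.pi ≤ 4 := by linarith [Real.pi_le_four]
    have hlow : t ≤ 2 * Real.sin t := by
      have e : 4 / Real.pi * t = 2 * (2 / Real.pi * t) := by ring
      have h4 : 4 / Real.pi * t ≤ 2 * Real.sin t := by linarith
      have h5 : 1 ≤ 4 / Real.pi := by rw [le_div_iff₀ hπ]; linarith
      have h6 := mul_le_mul_of_nonneg_right h5 ht.1.le
      rw [one_mul] at h6
      linarith
    rw [Real.norm_eq_abs, habs]
    rw [abs_le]
    constructor
    · have h1 : Real.log t ≤ Real.log (2 * Real.sin t) :=
        Real.log_le_log (by exact ht.1) hlow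
      have h2 : -|Real.log t| ≤ Real.log t := neg_abs_le _
      have hlog2 : 0 ≤ Real.log 2 := Real.log_nonneg (by norm_num)
      linarith
    · have h1 : Real.log (2 * Real.sin t) ≤ Real.log (2 * t) :=
        Real.log_le_log (by linarith) (by linarith)
      rw [Real.log_mul two_ne_zero ht.1.ne'] at h1
      have h2 : Real.log t ≤ |Real.log t| := le_abs_self _
      linarith

open MeasureTheory in
lemma periodic_intervalIntegrable {f : ℝ → ℝ} {T c : ℝ} (hT : 0 < T)
    (hp : Function.Periodic f T) (h : IntervalIntegrable f volume c (c + T)) :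
    ∀ a b, IntervalIntegrable f volume a b := by
  have key : ∀ m : ℤ, IntervalIntegrable f volume (c + m * T) (c + m * T + T) := by
    intro m
    have h2 := h.comp_sub_right (m * T)
    have hfe : (fun x => f (x - m * T)) = f := funext fun x => hp.sub_int_mul_eq m
    rw [hfe] at h2
    have e1 : c + m * T + T = c + T + m * T := by ring
    rwa [e1]
  have chain : ∀ (j : ℤ) (m : ℕ), IntervalIntegrable f volume (c + j * T) (c + (j + m) * T) := by
    intro j m
    induction m with
    | zero => simpa using IntervalIntegrable.refl
    | succ k ih =>
        have h2 := key (j + k)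
        have e1 : c + (↑j + ↑(k + 1)) * T = c + (j + k : ℤ) * T + T := by push_cast; ring
        have e2 : c + (↑j + ↑k) * T = c + ((j + k : ℤ)) * T := by push_cast; ring
        rw [e2] at ih
        rw [e1]
        exact ih.trans h2
  have main : ∀ a b, a ≤ b → IntervalIntegrable f volume a b := by
    intro a b hab
    set j : ℤ := ⌊(a - c) / T⌋ with hj
    set k : ℤ := ⌈(b - c) / T⌉ with hk
    have hja : c + j * T ≤ a := by
      have := Int.floor_le ((a - c) / T)
      have h2 : (j : ℝ) * T ≤ a - c := by
        rw [← le_div_iff₀ hT] at *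
        exact this
      linarith
    have hkb : b ≤ c + k * T := by
      have := Int.le_ceil ((b - c) / T)
      have h2 : b - c ≤ (k : ℝ) * T := by
        rw [← div_le_iff₀ hT] at *
        exact this
      linarith
    have hjk : j ≤ k := by
      have h1 : (j : ℝ) * T ≤ (k : ℝ) * T := by linarith
      exact_mod_cast le_of_mul_le_mul_right h1 hT
    obtain ⟨m, hm⟩ : ∃ m : ℕ, k = j + m := ⟨(k - j).toNat, by omega⟩
    have hint := chain j m
    have hke : (k : ℝ) = (j : ℝ) + (m : ℕ) := by exact_mod_cast hm
    rw [← hke] at hint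
    refine hint.mono_set ?_
    rw [Set.uIcc_of_le hab, Set.uIcc_of_le (by nlinarith [(show (j:ℝ) ≤ (k:ℝ) by exact_mod_cast hjk), hT] :
      c + (j : ℝ) * T ≤ c + (k : ℝ) * T)]
    exact Set.Icc_subset_Icc hja hkb
  intro a b
  rcases le_total a b with hab | hab
  · exact main a b hab
  · exact (main b a hab).symm

lemma prod_two_sin (n : ℕ) (hn : 0 < n) (θ : ℝ) :
    ∏ k ∈ Finset.range n, (2 * Real.sin (θ + k * Real.pi / n)) = 2 * Real.sin (n * θ) := by
  have h := prod_two_sin_complex n hn (θ : ℂ)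
  rw [← Complex.ofReal_inj]
  push_cast
  convert h using 2

open MeasureTheory in
lemma f_intervalIntegrable (a b : ℝ) :
    IntervalIntegrable (fun t => Real.log |2 * Real.sin t|) volume a b := by
  set f : ℝ → ℝ := fun t => Real.log |2 * Real.sin t| with hf
  have hπ := Real.pi_pos
  have hper : Function.Periodic f Real.pi := by
    intro x
    simp only [hf, Real.sin_add_pi, mul_neg, abs_neg]
  have hI1 : IntervalIntegrable f volume 0 (Real.pi / 2) :=
    (intervalIntegrable_iff_integrableOn_Ioc_of_le (by positivity)).mpr integrableOn_f_Ioc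
  have heven : (fun x => f (-x)) = f := by
    funext x
    simp only [hf, Real.sin_neg, mul_neg, abs_neg]
  have hI2 : IntervalIntegrable f volume (-(Real.pi / 2)) 0 := by
    have h2 := (IntervalIntegrable.iff_comp_neg (by simp)).mp hI1
    rw [heven] at h2
    simpa using h2.symm
  have hbase : IntervalIntegrable f volume (-(Real.pi / 2)) (-(Real.pi / 2) + Real.pi) := by
    have h3 := hI2.trans hI1
    have : -(Real.pi / 2) + Real.pi = Real.pi / 2 := by ring
    rwa [this]
  exact periodic_intervalIntegrable hπ hper hbase a b

lemma lobachevsky_zero : lobachevsky 0 = 0 := by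
  simp [lobachevsky]

open MeasureTheory intervalIntegral in
lemma lobachevsky_pre (n : ℕ) (hn : 0 < n) (θ : ℝ) :
    lobachevsky (n * θ) =
      n * ∑ k ∈ Finset.range n, lobachevsky (θ + k * Real.pi / n)
        - n * ∑ k ∈ Finset.range n, lobachevsky ((k : ℝ) * Real.pi / n) := by
  set f : ℝ → ℝ := fun t => Real.log |2 * Real.sin t| with hf
  have hn' : (n : ℝ) ≠ 0 := Nat.cast_ne_zero.mpr hn.ne'
  -- countable zero set
  have hZ : (volume {x : ℝ | Real.sin (n * x) = 0}) = 0 := by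
    apply Set.Countable.measure_zero
    apply Set.Countable.mono ?_ (Set.countable_range (fun m : ℤ => (m : ℝ) * Real.pi / n))
    intro x hx
    obtain ⟨m, hm⟩ := Real.sin_eq_zero_iff.mp hx
    exact ⟨m, by field_simp [hm]; exact hm⟩
  have hae : ∀ᵐ x : ℝ, x ∈ Set.uIoc 0 θ →
      f (n * x) = ∑ k ∈ Finset.range n, f (x + k * Real.pi / n) := by
    have h0 := (measure_eq_zero_iff_ae_notMem (μ := volume)).mp hZ
    filter_upwards [h0] with x hx _
    have hsx : Real.sin (n * x) ≠ 0 := hx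
    have hprod := prod_two_sin n hn x
    have hne : ∀ k ∈ Finset.range n, (2 * Real.sin (x + k * Real.pi / n)) ≠ 0 := by
      intro k hk h0'
      rw [Finset.prod_eq_zero hk h0'] at hprod
      exact hsx (by linarith [hprod.symm] )
    calc f (n * x) = Real.log (2 * Real.sin (n * x)) := Real.log_abs _
      _ = Real.log (∏ k ∈ Finset.range n, (2 * Real.sin (x + k * Real.pi / n))) := by
          rw [hprod]
      _ = ∑ k ∈ Finset.range n, Real.log (2 * Real.sin (x + k * Real.pi / n)) :=
          Real.log_prod hne
      _ = ∑ k ∈ Finset.range n, f (x + k * Real.pi / n) :=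
          Finset.sum_congr rfl fun k _ => (Real.log_abs _).symm
  have hcomp : ∀ c : ℝ, IntervalIntegrable (fun x => f (x + c)) volume 0 θ := by
    intro c
    have h2 := (f_intervalIntegrable (0 + c) (θ + c)).comp_add_right c
    simpa only [add_sub_cancel_right] using h2
  have step1 : ∫ x in (0:ℝ)..θ, f (n * x) = (n : ℝ)⁻¹ * ∫ x in (0:ℝ)..(n * θ), f x := by
    have h := intervalIntegral.integral_comp_mul_left (a := (0:ℝ)) (b := θ) (c := (n : ℝ)) f hn'
    simpa [smul_eq_mul] using h
  have step2 : ∫ x in (0:ℝ)..θ, f (n * x)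
      = ∑ k ∈ Finset.range n, ∫ x in (0:ℝ)..θ, f (x + k * Real.pi / n) := by
    rw [intervalIntegral.integral_congr_ae hae]
    exact intervalIntegral.integral_finset_sum fun k _ => hcomp _
  have step3 : ∀ k : ℕ, ∫ x in (0:ℝ)..θ, f (x + k * Real.pi / n)
      = (∫ x in (0:ℝ)..(θ + k * Real.pi / n), f x) - ∫ x in (0:ℝ)..((k:ℝ) * Real.pi / n), f x := by
    intro k
    rw [intervalIntegral.integral_comp_add_right, zero_add]
    exact (intervalIntegral.integral_interval_sub_left
      (f_intervalIntegrable 0 (θ + k * Real.pi / n)) (f_intervalIntegrable 0 _)).symm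
  have key : ∫ x in (0:ℝ)..(n * θ), f x
      = (n : ℝ) * ∑ k ∈ Finset.range n,
          ((∫ x in (0:ℝ)..(θ + k * Real.pi / n), f x) - ∫ x in (0:ℝ)..((k:ℝ) * Real.pi / n), f x) := by
    rw [← Finset.sum_congr rfl fun k _ => step3 k, ← step2, step1]
    field_simp
  have hlob : ∀ c : ℝ, lobachevsky c = -∫ x in (0:ℝ)..c, f x := fun c => by
    rw [hf]; rfl
  rw [hlob, key, Finset.sum_sub_distrib]
  simp only [hlob]
  rw [Finset.sum_neg_distrib, Finset.sum_neg_distrib]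
  ring

open intervalIntegral in
lemma lobachevsky_reflect (x : ℝ) :
    lobachevsky (Real.pi - x) = lobachevsky Real.pi - lobachevsky x := by
  set f : ℝ → ℝ := fun t => Real.log |2 * Real.sin t| with hf
  have hlob : ∀ c : ℝ, lobachevsky c = -∫ t in (0:ℝ)..c, f t := fun c => by
    rw [hf]; rfl
  have h1 : ∫ t in (0:ℝ)..(Real.pi - x), f t
      = ∫ t in (0:ℝ)..(Real.pi - x), f (Real.pi - t) := by
    apply intervalIntegral.integral_congr
    intro t _
    simp only [hf, Real.sin_pi_sub]
  have h2 : ∫ t in (0:ℝ)..(Real.pi - x), f (Real.pi - t)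
      = ∫ t in x..Real.pi, f t := by
    have h := intervalIntegral.integral_comp_sub_left (a := (0:ℝ)) (b := Real.pi - x) f Real.pi
    simpa using h
  have h3 : (∫ t in (0:ℝ)..Real.pi, f t) - ∫ t in (0:ℝ)..x, f t = ∫ t in x..Real.pi, f t :=
    intervalIntegral.integral_interval_sub_left (f_intervalIntegrable 0 Real.pi)
      (f_intervalIntegrable 0 x)
  rw [hlob, hlob, hlob, h1, h2, ← h3]
  ring

lemma lobachevsky_sum_eq (n : ℕ) (hn : 0 < n) :
    2 * ∑ k ∈ Finset.range n, lobachevsky ((k : ℝ) * Real.pi / n)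
      = ((n : ℝ) - 1) * lobachevsky Real.pi := by
  have hn' : (n : ℝ) ≠ 0 := Nat.cast_ne_zero.mpr hn.ne'
  set S := ∑ k ∈ Finset.range n, lobachevsky ((k : ℝ) * Real.pi / n) with hS
  have hA1 : ∑ k ∈ Finset.range n, lobachevsky (((k : ℝ) + 1) * Real.pi / n)
      = S + lobachevsky Real.pi := by
    have h1 := Finset.sum_range_succ' (fun k : ℕ => lobachevsky ((k : ℝ) * Real.pi / n)) n
    have h2 := Finset.sum_range_succ (fun k : ℕ => lobachevsky ((k : ℝ) * Real.pi / n)) n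
    have h3 : ((n : ℝ)) * Real.pi / n = Real.pi := by field_simp
    push_cast at h1
    rw [h2, h3] at h1
    simp only [Nat.cast_zero, zero_mul, zero_div, lobachevsky_zero, add_zero] at h1
    rw [hS]
    exact h1.symm
  have hA2 : ∑ k ∈ Finset.range n, lobachevsky (((k : ℝ) + 1) * Real.pi / n)
      = n * lobachevsky Real.pi - S := by
    have hrefl := Finset.sum_range_reflect
      (fun j : ℕ => lobachevsky (((j : ℝ) + 1) * Real.pi / n)) n
    rw [← hrefl]
    have hterm : ∀ j ∈ Finset.range n,
        lobachevsky ((((n - 1 - j : ℕ) : ℝ) + 1) * Real.pi / n)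
          = lobachevsky Real.pi - lobachevsky ((j : ℝ) * Real.pi / n) := by
      intro j hj
      have hj' : j < n := Finset.mem_range.mp hj
      have hcast : (((n - 1 - j : ℕ) : ℝ) + 1) = (n : ℝ) - j := by
        have : n - 1 - j + 1 = n - j := by omega
        rw [← Nat.cast_one (R := ℝ), ← Nat.cast_add, this, Nat.cast_sub hj'.le]
      have harg : (((n : ℝ) - j) * Real.pi / n) = Real.pi - (j : ℝ) * Real.pi / n := by
        field_simp
      rw [hcast, harg, lobachevsky_reflect]
    rw [Finset.sum_congr rfl hterm, Finset.sum_sub_distrib, Finset.sum_const,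
      Finset.card_range, nsmul_eq_mul, hS]
  have := hA1.symm.trans hA2
  linarith

lemma lobachevsky_pi : lobachevsky Real.pi = 0 := by
  have h := lobachevsky_pre 2 (by norm_num) (Real.pi / 2)
  simp only [Finset.sum_range_succ, Finset.sum_range_zero, Nat.cast_zero, Nat.cast_one,
    Nat.cast_ofNat, zero_mul, zero_div, zero_add, add_zero, one_mul, lobachevsky_zero] at h
  have h2 : ((2 : ℝ)) * (Real.pi / 2) = Real.pi := by ring
  have h5 : Real.pi / 2 + Real.pi / 2 = Real.pi := by ring
  rw [h2, h5] at h
  linarith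

/-- The distribution relation `Л(nθ) = n ∑_{k=0}^{n-1} Л(θ + kπ/n)`. -/
theorem lobachevsky_distribution (n : ℕ) (hn : 0 < n) (θ : ℝ) :
    lobachevsky (n * θ) =
      n * ∑ k ∈ Finset.range n, lobachevsky (θ + k * Real.pi / n) := by
  have h := lobachevsky_pre n hn θ
  have h2 := lobachevsky_sum_eq n hn
  rw [lobachevsky_pi, mul_zero] at h2
  have h3 : ∑ k ∈ Finset.range n, lobachevsky ((k : ℝ) * Real.pi / n) = 0 := by linarith
  rw [h, h3, mul_zero, sub_zero]
end

section
/- For all real α, β > 0 with α + β < π, one has Л(α) + Л(β) + Л(π − α − β) ≤ 3 Л(π/3), with equality if and only if α = β = π/3. -/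
open Real MeasureTheory Set intervalIntegral

lemma measurable_log_two_sin : Measurable fun t : ℝ => Real.log |2 * Real.sin t| :=
  Real.measurable_log.comp ((measurable_const.mul Real.measurable_sin).abs)

lemma neg_log_le {t : ℝ} (ht : 0 < t) : -Real.log t ≤ 2 * t ^ (-(1/2) : ℝ) := by
  have h0 : (0:ℝ) < t ^ (-(1/2) : ℝ) := Real.rpow_pos_of_pos ht _
  have h1 : Real.log (t ^ (-(1/2) : ℝ)) ≤ t ^ (-(1/2) : ℝ) - 1 :=
    Real.log_le_sub_one_of_pos h0
  rw [Real.log_rpow ht] at h1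
  nlinarith [h0]

lemma integrable_log_two_sin {θ : ℝ} (hθ : 0 < θ) (hθ' : θ < Real.pi) :
    IntervalIntegrable (fun t => Real.log |2 * Real.sin t|) volume 0 θ := by
  rw [intervalIntegrable_iff_integrableOn_Ioc_of_le hθ.le]
  have hsθ : 0 < Real.sin θ := Real.sin_pos_of_pos_of_lt_pi hθ hθ'
  set c : ℝ := Real.sin θ / θ with hc
  have hcpos : 0 < c := div_pos hsθ hθ
  -- dominating function
  set C : ℝ := |Real.log (2 * c)| + Real.log 2 with hC
  have hg : IntegrableOn (fun t : ℝ => C + 2 * t ^ (-(1/2) : ℝ)) (Ioc 0 θ) volume := by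
    apply Integrable.add
    · exact integrableOn_const measure_Ioc_lt_top.ne
    · have := (intervalIntegrable_rpow' (a := 0) (b := θ)
        (r := -(1/2)) (by norm_num)).const_mul 2
      rw [intervalIntegrable_iff_integrableOn_Ioc_of_le hθ.le] at this
      exact this
  refine MeasureTheory.Integrable.mono hg (measurable_log_two_sin.aestronglyMeasurable.restrict) ?_
  filter_upwards [ae_restrict_mem measurableSet_Ioc] with t ht
  obtain ⟨ht0, htθ⟩ := ht
  have hst : 0 < Real.sin t := Real.sin_pos_of_pos_of_lt_pi ht0 (lt_of_le_of_lt htθ hθ')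
  have habs : |2 * Real.sin t| = 2 * Real.sin t := abs_of_pos (by linarith)
  have hrpow : (0:ℝ) < t ^ (-(1/2) : ℝ) := Real.rpow_pos_of_pos ht0 _
  have hCnn : 0 ≤ C := add_nonneg (abs_nonneg _) (Real.log_nonneg (by norm_num))
  -- lower bound on sin t by concavity: c * t ≤ sin t
  have hsin_lb : c * t ≤ Real.sin t := by
    have hconc := strictConcaveOn_sin_Icc.concaveOn
    have ha : (0:ℝ) ≤ 1 - t / θ := by
      have := div_le_one_of_le₀ htθ hθ.le; linarith
    have hb : (0:ℝ) ≤ t / θ := by positivity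
    have h2 := hconc.2 (show (0:ℝ) ∈ Icc 0 Real.pi from ⟨le_rfl, Real.pi_pos.le⟩)
      (show θ ∈ Icc 0 Real.pi from ⟨hθ.le, hθ'.le⟩) ha hb (by ring)
    simp only [smul_eq_mul, Real.sin_zero, mul_zero, zero_add] at h2
    calc c * t = t / θ * Real.sin θ := by rw [hc]; field_simp
    _ ≤ Real.sin (t / θ * θ) := h2
    _ = Real.sin t := by rw [div_mul_cancel₀ _ hθ.ne']
  -- upper bound: log (2 sin t) ≤ log 2
  have hub : Real.log (2 * Real.sin t) ≤ Real.log 2 := by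
    have : 2 * Real.sin t ≤ 2 := by
      have := Real.sin_le_one t; linarith
    exact Real.log_le_log (by linarith) this
  -- lower bound: log (2 sin t) ≥ log (2c) + log t
  have hlb : Real.log (2 * c) + Real.log t ≤ Real.log (2 * Real.sin t) := by
    have h1 : 2 * c * t ≤ 2 * Real.sin t := by linarith
    have h2 : (0:ℝ) < 2 * c * t := by positivity
    rw [← Real.log_mul (by positivity) ht0.ne']
    exact Real.log_le_log h2 h1
  have hlogt : -Real.log t ≤ 2 * t ^ (-(1/2) : ℝ) := neg_log_le ht0
  have hbound : abs (Real.log |2 * Real.sin t|) ≤ C + 2 * t ^ (-(1/2) : ℝ) := by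
    rw [habs, abs_le]
    constructor
    · have h3 := neg_abs_le (Real.log (2 * c))
      have hlog2 : 0 ≤ Real.log 2 := Real.log_nonneg one_le_two
      rw [hC]
      linarith [hlb, hlogt]
    · have : Real.log 2 ≤ C := by
        rw [hC]; have := abs_nonneg (Real.log (2 * c)); linarith
      nlinarith [hub]
  calc ‖Real.log |2 * Real.sin t|‖ = abs (Real.log |2 * Real.sin t|) := rfl
  _ ≤ C + 2 * t ^ (-(1/2) : ℝ) := hbound
  _ ≤ ‖C + 2 * t ^ (-(1/2) : ℝ)‖ := le_abs_self _

lemma lobachevsky_hasDerivAt {x : ℝ} (hx : 0 < x) (hx' : x < Real.pi) :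
    HasDerivAt lobachevsky (-Real.log (2 * Real.sin x)) x := by
  have hsx : 0 < Real.sin x := Real.sin_pos_of_pos_of_lt_pi hx hx'
  have hne : |2 * Real.sin x| ≠ 0 := by
    rw [abs_ne_zero]; positivity
  have hcont : ContinuousAt (fun t => Real.log |2 * Real.sin t|) x :=
    ContinuousAt.log ((continuous_const.mul Real.continuous_sin).abs.continuousAt) hne
  have h1 : HasDerivAt (fun u => ∫ t in (0:ℝ)..u, Real.log |2 * Real.sin t|)
      (Real.log |2 * Real.sin x|) x :=
    intervalIntegral.integral_hasDerivAt_right (integrable_log_two_sin hx hx')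
      (measurable_log_two_sin.stronglyMeasurable.stronglyMeasurableAtFilter)
      hcont
  have h2 := h1.neg
  rw [abs_of_pos (show (0:ℝ) < 2 * Real.sin x by positivity)] at h2
  exact h2

/-- If `0 < x < y` and `x + y < π` then `sin x < sin y`. -/
lemma sin_lt_sin_of_lt {x y : ℝ} (hx : 0 < x) (hxy : x < y) (h : x + y < Real.pi) :
    Real.sin x < Real.sin y := by
  rcases le_or_gt y (Real.pi / 2) with hy | hy
  · exact Real.strictMonoOn_sin ⟨by linarith [Real.pi_pos], by linarith⟩
      ⟨by linarith [Real.pi_pos], hy⟩ hxy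
  · have h1 : x < Real.pi - y := by linarith
    have h2 : Real.pi - y ≤ Real.pi / 2 := by linarith
    have := Real.strictMonoOn_sin
      (show x ∈ Icc (-(Real.pi / 2)) (Real.pi / 2) from ⟨by linarith [Real.pi_pos], by linarith⟩)
      (show Real.pi - y ∈ Icc (-(Real.pi / 2)) (Real.pi / 2) from
        ⟨by linarith [Real.pi_pos], h2⟩) h1
    rwa [Real.sin_pi_sub] at this

/-- Symmetrization: if `0 < α < β` with `α + β < π` then
`Л α + Л β < 2 Л ((α+β)/2)`. -/
lemma lob_symmetrize {α β : ℝ} (hα : 0 < α) (hab : α < β) (h : α + β < Real.pi) :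
    lobachevsky α + lobachevsky β < 2 * lobachevsky ((α + β) / 2) := by
  set s := α + β with hs
  set G := fun x : ℝ => lobachevsky x + lobachevsky (s - x) with hG
  have hβpos : 0 < β := hα.trans hab
  have hspos : 0 < s := by positivity
  have key : ∀ x ∈ Ioo (0:ℝ) s, HasDerivAt G
      (Real.log (2 * Real.sin (s - x)) - Real.log (2 * Real.sin x)) x := by
    intro x hx
    have hx1 : 0 < x := hx.1
    have hx2 : x < Real.pi := lt_trans hx.2 h
    have hsx1 : 0 < s - x := by linarith [hx.2]
    have hsx2 : s - x < Real.pi := by linarith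
    have d1 := lobachevsky_hasDerivAt hx1 hx2
    have d2 : HasDerivAt (fun y : ℝ => lobachevsky (s - y))
        (Real.log (2 * Real.sin (s - x))) x := by
      have hinner : HasDerivAt (fun y : ℝ => s - y) (-1) x := by
        simpa using (hasDerivAt_id x).const_sub s
      have := (lobachevsky_hasDerivAt hsx1 hsx2).comp x hinner
      simpa [Function.comp_def] using this
    have := d1.add d2
    exact this.congr_deriv (by ring)
  have hmono : StrictMonoOn G (Icc α (s / 2)) := by
    apply strictMonoOn_of_deriv_pos (convex_Icc _ _)
    · intro x hx
      have hx1 : 0 < x := lt_of_lt_of_le hα hx.1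
      have hx2 : x < s := lt_of_le_of_lt hx.2 (by linarith)
      exact (key x ⟨hx1, hx2⟩).continuousAt.continuousWithinAt
    · intro x hx
      rw [interior_Icc] at hx
      have hx1 : 0 < x := hα.trans hx.1
      have hx2 : x < s := lt_trans hx.2 (by linarith)
      rw [(key x ⟨hx1, hx2⟩).deriv]
      have hlt : Real.sin x < Real.sin (s - x) := by
        apply sin_lt_sin_of_lt hx1 (by linarith [hx.2]) (by linarith)
      have hsx1 : 0 < Real.sin x :=
        Real.sin_pos_of_pos_of_lt_pi hx1 (lt_trans hx2 h)
      have := Real.log_lt_log (by linarith) (show 2 * Real.sin x < 2 * Real.sin (s - x) by linarith)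
      linarith
  have hαm : α < s / 2 := by rw [hs]; linarith
  have := hmono ⟨le_rfl, hαm.le⟩ ⟨hαm.le, le_rfl⟩ hαm
  have hGα : G α = lobachevsky α + lobachevsky β := by
    simp only [hG]
    rw [show s - α = β by rw [hs]; ring]
  have hGm : G (s / 2) = 2 * lobachevsky (s / 2) := by
    simp only [hG]
    rw [show s - s / 2 = s / 2 by ring]; ring
  rw [hGα, hGm] at this
  exact this

/-- One-variable maximization: `2 Л(s/2) + Л(π - s) < 3 Л(π/3)` for `s ∈ (0, π)`,
`s ≠ 2π/3`. -/
lemma lob_one_var {s : ℝ} (hs : 0 < s) (hs' : s < Real.pi) (hne : s ≠ 2 * Real.pi / 3) :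
    2 * lobachevsky (s / 2) + lobachevsky (Real.pi - s) < 3 * lobachevsky (Real.pi / 3) := by
  have hπ := Real.pi_pos
  set H := fun u : ℝ => 2 * lobachevsky (u / 2) + lobachevsky (Real.pi - u) with hH
  have key : ∀ u ∈ Ioo (0:ℝ) Real.pi, HasDerivAt H
      (Real.log (2 * Real.sin u) - Real.log (2 * Real.sin (u / 2))) u := by
    intro u hu
    have hu1 : 0 < u := hu.1
    have hu2 : u < Real.pi := hu.2
    have hhalf1 : 0 < u / 2 := by linarith
    have hhalf2 : u / 2 < Real.pi := by linarith
    have d1 : HasDerivAt (fun y : ℝ => lobachevsky (y / 2))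
        (-Real.log (2 * Real.sin (u / 2)) * (1 / 2)) u := by
      have hinner : HasDerivAt (fun y : ℝ => y / 2) (1 / 2 : ℝ) u := by
        simpa using (hasDerivAt_id u).div_const 2
      have := (lobachevsky_hasDerivAt hhalf1 hhalf2).comp u hinner; exact this
    have d2 : HasDerivAt (fun y : ℝ => lobachevsky (Real.pi - y))
        (Real.log (2 * Real.sin (Real.pi - u))) u := by
      have hinner : HasDerivAt (fun y : ℝ => Real.pi - y) (-1) u := by
        simpa using (hasDerivAt_id u).const_sub Real.pi
      have := (lobachevsky_hasDerivAt (by linarith : 0 < Real.pi - u)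
        (by linarith : Real.pi - u < Real.pi)).comp u hinner
      simpa [Function.comp_def] using this
    have := (d1.const_mul 2).add d2
    rw [Real.sin_pi_sub] at this
    exact this.congr_deriv (by ring)
  have hval : H (2 * Real.pi / 3) = 3 * lobachevsky (Real.pi / 3) := by
    simp only [hH]
    have h1 : 2 * Real.pi / 3 / 2 = Real.pi / 3 := by ring
    have h2 : Real.pi - 2 * Real.pi / 3 = Real.pi / 3 := by ring
    rw [h1, h2]; ring
  rcases lt_or_gt_of_ne hne with hlt | hgt
  · -- s < 2π/3 : H strictly increasing on [s, 2π/3]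
    have hmono : StrictMonoOn H (Icc s (2 * Real.pi / 3)) := by
      apply strictMonoOn_of_deriv_pos (convex_Icc _ _)
      · intro x hx
        have hx1 : 0 < x := lt_of_lt_of_le hs hx.1
        have hx2 : x < Real.pi := lt_of_le_of_lt hx.2 (by linarith)
        exact (key x ⟨hx1, hx2⟩).continuousAt.continuousWithinAt
      · intro x hx
        rw [interior_Icc] at hx
        have hx1 : 0 < x := hs.trans hx.1
        have hx2 : x < Real.pi := lt_trans hx.2 (by linarith)
        rw [(key x ⟨hx1, hx2⟩).deriv]
        have hlt2 : Real.sin (x / 2) < Real.sin x :=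
          sin_lt_sin_of_lt (by linarith) (by linarith) (by linarith [hx.2])
        have hsp : 0 < Real.sin (x / 2) :=
          Real.sin_pos_of_pos_of_lt_pi (by linarith) (by linarith)
        have := Real.log_lt_log (by linarith)
          (show 2 * Real.sin (x / 2) < 2 * Real.sin x by linarith)
        linarith
    have := hmono ⟨le_rfl, hlt.le⟩ ⟨hlt.le, le_rfl⟩ hlt
    rwa [hval] at this
  · -- s > 2π/3 : H strictly decreasing on [2π/3, s]
    have hanti : StrictAntiOn H (Icc (2 * Real.pi / 3) s) := by
      apply strictAntiOn_of_deriv_neg (convex_Icc _ _)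
      · intro x hx
        have hx1 : 0 < x := lt_of_lt_of_le (by linarith) hx.1
        have hx2 : x < Real.pi := lt_of_le_of_lt hx.2 hs'
        exact (key x ⟨hx1, hx2⟩).continuousAt.continuousWithinAt
      · intro x hx
        rw [interior_Icc] at hx
        have hx1 : 0 < x := lt_trans (by linarith) hx.1
        have hx2 : x < Real.pi := lt_trans hx.2 hs'
        rw [(key x ⟨hx1, hx2⟩).deriv]
        -- sin x < sin (x/2) since sin x = sin (π - x) and π - x < x/2
        have h1 : 0 < Real.pi - x := by linarith
        have h2 : Real.pi - x < x / 2 := by linarith [hx.1]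
        have h3 : (Real.pi - x) + x / 2 < Real.pi := by linarith
        have hlt2 : Real.sin (Real.pi - x) < Real.sin (x / 2) :=
          sin_lt_sin_of_lt h1 h2 h3
        rw [Real.sin_pi_sub] at hlt2
        have hsp : 0 < Real.sin x := Real.sin_pos_of_pos_of_lt_pi hx1 hx2
        have := Real.log_lt_log (by linarith)
          (show 2 * Real.sin x < 2 * Real.sin (x / 2) by linarith)
        linarith
    have := hanti ⟨le_rfl, hgt.le⟩ ⟨hgt.le, le_rfl⟩ hgt
    rwa [hval] at this

lemma lob_one_var_le {s : ℝ} (hs : 0 < s) (hs' : s < Real.pi) :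
    2 * lobachevsky (s / 2) + lobachevsky (Real.pi - s) ≤ 3 * lobachevsky (Real.pi / 3) := by
  rcases eq_or_ne s (2 * Real.pi / 3) with rfl | hne
  · have h1 : 2 * Real.pi / 3 / 2 = Real.pi / 3 := by ring
    have h2 : Real.pi - 2 * Real.pi / 3 = Real.pi / 3 := by ring
    rw [h1, h2]; exact le_of_eq (by ring)
  · exact (lob_one_var hs hs' hne).le

lemma lob_pair_le {α β : ℝ} (hα : 0 < α) (hβ : 0 < β) (h : α + β < Real.pi) :
    lobachevsky α + lobachevsky β ≤ 2 * lobachevsky ((α + β) / 2) := by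
  rcases lt_trichotomy α β with hlt | rfl | hgt
  · exact (lob_symmetrize hα hlt h).le
  · have : (α + α) / 2 = α := by ring
    rw [this]; exact le_of_eq (by ring)
  · have := lob_symmetrize hβ hgt (by linarith)
    have he : (β + α) / 2 = (α + β) / 2 := by ring
    rw [he] at this; linarith

/-- The volume `Л(α) + Л(β) + Л(π - α - β)` of an ideal tetrahedron is at most
`3 Л(π/3)`, with equality iff `α = β = π/3`. -/
theorem ideal_tetrahedron_max_volume (α β : ℝ) (hα : 0 < α) (hβ : 0 < β)
    (hαβ : α + β < Real.pi) :
    lobachevsky α + lobachevsky β + lobachevsky (Real.pi - α - β) ≤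
        3 * lobachevsky (Real.pi / 3) ∧
      (lobachevsky α + lobachevsky β + lobachevsky (Real.pi - α - β) =
          3 * lobachevsky (Real.pi / 3) ↔ α = Real.pi / 3 ∧ β = Real.pi / 3) := by
  have hπ := Real.pi_pos
  have hs : 0 < α + β := by linarith
  have hγ : Real.pi - α - β = Real.pi - (α + β) := by ring
  have h1 : lobachevsky α + lobachevsky β ≤ 2 * lobachevsky ((α + β) / 2) :=
    lob_pair_le hα hβ hαβ
  have h2 : 2 * lobachevsky ((α + β) / 2) + lobachevsky (Real.pi - (α + β)) ≤
      3 * lobachevsky (Real.pi / 3) := lob_one_var_le hs hαβ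
  have hle : lobachevsky α + lobachevsky β + lobachevsky (Real.pi - α - β) ≤
      3 * lobachevsky (Real.pi / 3) := by
    rw [hγ]; linarith
  refine ⟨hle, ?_, ?_⟩
  · -- equality → α = β = π/3
    intro heq
    by_contra hcon
    -- show strict inequality
    have hstrict : lobachevsky α + lobachevsky β + lobachevsky (Real.pi - α - β) <
        3 * lobachevsky (Real.pi / 3) := by
      rcases ne_or_eq α β with hne | rfl
      · -- α ≠ β: symmetrization is strict
        have h1' : lobachevsky α + lobachevsky β < 2 * lobachevsky ((α + β) / 2) := by
          rcases hne.lt_or_gt with hlt | hgt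
          · exact lob_symmetrize hα hlt hαβ
          · have := lob_symmetrize hβ hgt (by linarith)
            have he : (β + α) / 2 = (α + β) / 2 := by ring
            rw [he] at this; linarith
        rw [hγ]; linarith
      · -- α = β but not both π/3, so α ≠ π/3, so 2α ≠ 2π/3
        have hne3 : α ≠ Real.pi / 3 := by
          intro h'; exact hcon ⟨h', h'⟩
        have hsne : α + α ≠ 2 * Real.pi / 3 := by
          intro h'; apply hne3; linarith
        have h2' : 2 * lobachevsky ((α + α) / 2) + lobachevsky (Real.pi - (α + α)) <
            3 * lobachevsky (Real.pi / 3) := lob_one_var hs hαβ hsne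
        have he : (α + α) / 2 = α := by ring
        rw [he] at h2'
        rw [hγ]; linarith
    linarith
  · -- α = β = π/3 → equality
    rintro ⟨rfl, rfl⟩
    have he : Real.pi - Real.pi / 3 - Real.pi / 3 = Real.pi / 3 := by ring
    rw [he]; ring
end
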